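/- Let H be the m×(2^m−1) parity-check matrix of the Hamming code (columns are all distinct nonzero vectors of F_2^m) with m ≥ 2. Then the number of stopping sets of H of size 4 equals (1/24)(12^m − 6·6^m − 4·5^m + 3·4^m + 20·3^m − 14·2^m). -/

import Mathlib

set_option maxRecDepth 10000

open Finset

/-- A subset `S` of column indices is a stopping set of `H` if no row of `H`
restricted to `S` has weight exactly one. -/
def IsStoppingSet {r n : ℕ} (H : Matrix (Fin r) (Fin n) (ZMod 2)) (S : Finset (Fin n)) : Prop :=
  ∀ i, (S.filter fun j => H i j = 1).card ≠ 1

/-- The number of stopping sets of `H` of size `l`. -/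
noncomputable def numStoppingSets {r n : ℕ} (H : Matrix (Fin r) (Fin n) (ZMod 2)) (l : ℕ) : ℕ :=
  Nat.card {S : Finset (Fin n) // IsStoppingSet H S ∧ S.card = l}

def Ok (p : Fin 4 → ZMod 2) : Prop := (univ.filter fun k => p k = 1).card ≠ 1
instance : DecidablePred Ok := fun p => by unfold Ok; infer_instance
def EqPairs : Finset (Fin 4 × Fin 4) := univ.filter fun q => q.1 < q.2
def pat (Q : (Fin 4 → ZMod 2) → Prop) [DecidablePred Q] (E : Finset (Fin 4 × Fin 4)) : ℕ :=
  (univ.filter fun p : Fin 4 → ZMod 2 => Q p ∧ ∀ q ∈ E, p q.1 = p q.2).card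

lemma prod_ind {β : Type*} (t : Finset β) (p : β → Prop) [DecidablePred p] :
    ∏ q ∈ t, (if p q then (1:ℤ) else 0) = (if ∀ q ∈ t, p q then (1:ℤ) else 0) := by
  rw [Finset.prod_boole]

lemma card_coordwise (m : ℕ) (P : (Fin 4 → ZMod 2) → Prop) [DecidablePred P] :
    (univ.filter fun v : Fin 4 → (Fin m → ZMod 2) => ∀ i, P fun k => v k i).card
      = (univ.filter P).card ^ m := by
  rw [← Fintype.card_subtype, ← Fintype.card_subtype]
  have e : {v : Fin 4 → (Fin m → ZMod 2) // ∀ i, P fun k => v k i} ≃ (Fin m → {p // P p}) :=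
    { toFun := fun v i => ⟨fun k => v.1 k i, v.2 i⟩
      invFun := fun f => ⟨fun k i => (f i).1 k, fun i => (f i).2⟩
      left_inv := fun v => rfl
      right_inv := fun f => rfl }
  rw [Fintype.card_congr e, Fintype.card_fun, Fintype.card_fin]

lemma count_eqs (m : ℕ) (Q : (Fin 4 → ZMod 2) → Prop) [DecidablePred Q]
    (E : Finset (Fin 4 × Fin 4)) :
    ((univ.filter fun v : Fin 4 → (Fin m → ZMod 2) =>
        (∀ i, Q fun k => v k i) ∧ ∀ q ∈ E, v q.1 = v q.2).card : ℤ)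
      = (pat Q E : ℤ)^m := by
  have h : (univ.filter fun v : Fin 4 → (Fin m → ZMod 2) =>
        (∀ i, Q fun k => v k i) ∧ ∀ q ∈ E, v q.1 = v q.2)
      = univ.filter fun v : Fin 4 → (Fin m → ZMod 2) =>
        ∀ i, (fun p => Q p ∧ ∀ q ∈ E, p q.1 = p q.2) fun k => v k i := by
    ext v
    simp only [mem_filter, mem_univ, true_and]
    constructor
    · rintro ⟨h1, h2⟩ i
      exact ⟨h1 i, fun q hq => congrFun (h2 q hq) i⟩
    · intro h
      exact ⟨fun i => (h i).1, fun q hq => funext fun i => (h i).2 q hq⟩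
  rw [h]
  push_cast [pat]
  exact_mod_cast congrArg (Nat.cast : ℕ → ℤ)
    (card_coordwise m (fun p => Q p ∧ ∀ q ∈ E, p q.1 = p q.2))

lemma ite_irrel {P : Prop} {h1 h2 : Decidable P} (a b : ℤ) :
    (@ite ℤ P h1 a b) = @ite ℤ P h2 a b := by
  congr!

lemma sum_filter_ind {α : Type*} [Fintype α] (A B : α → Prop)
    [DecidablePred A] [DecidablePred B] :
    ∑ v ∈ univ.filter A, (if B v then (1:ℤ) else 0)
      = ((univ.filter fun v => A v ∧ B v).card : ℤ) := by
  rw [Finset.sum_filter]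
  have h : ∀ v ∈ (univ : Finset α),
      (if A v then (if B v then (1:ℤ) else 0) else 0)
        = (if A v ∧ B v then (1:ℤ) else 0) := by
    intro v _
    by_cases h1 : A v <;> by_cases h2 : B v <;> simp [h1, h2]
  rw [Finset.sum_congr rfl h]
  exact (Finset.natCast_card_filter _ _).symm

lemma IE (m : ℕ) (Q : (Fin 4 → ZMod 2) → Prop) [DecidablePred Q] :
    ((univ.filter fun v : Fin 4 → (Fin m → ZMod 2) =>
        (∀ i, Q fun k => v k i) ∧ ∀ q ∈ EqPairs, v q.1 ≠ v q.2).card : ℤ)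
      = ∑ E ∈ EqPairs.powerset, (-1:ℤ)^E.card * (pat Q E : ℤ)^m := by
  have key : ∀ v : Fin 4 → (Fin m → ZMod 2),
      (∏ q ∈ EqPairs, (if v q.1 ≠ v q.2 then (1:ℤ) else 0))
        = ∑ E ∈ EqPairs.powerset, (-1:ℤ)^E.card *
            (if ∀ q ∈ E, v q.1 = v q.2 then (1:ℤ) else 0) := by
    intro v
    have h1 : ∀ q ∈ EqPairs, (if v q.1 ≠ v q.2 then (1:ℤ) else 0)
        = (fun q => -(if v q.1 = v q.2 then (1:ℤ) else 0)) q + (fun _ => (1:ℤ)) q := by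
      intro q _
      by_cases h : v q.1 = v q.2 <;> simp [h]
    rw [Finset.prod_congr rfl h1, Finset.prod_add]
    apply Finset.sum_congr rfl
    intro E hE
    rw [Finset.prod_const_one, mul_one]
    have h2 : ∀ q ∈ E, -(if v q.1 = v q.2 then (1:ℤ) else 0)
        = (-1) * (if v q.1 = v q.2 then (1:ℤ) else 0) := by intro q _; ring
    rw [Finset.prod_congr rfl h2, Finset.prod_mul_distrib, Finset.prod_const,
      prod_ind E (fun q => v q.1 = v q.2)]
    exact congrArg ((-1:ℤ)^E.card * ·) (ite_irrel 1 0)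
  calc ((univ.filter fun v : Fin 4 → (Fin m → ZMod 2) =>
        (∀ i, Q fun k => v k i) ∧ ∀ q ∈ EqPairs, v q.1 ≠ v q.2).card : ℤ)
      = ∑ v ∈ univ.filter (fun v : Fin 4 → (Fin m → ZMod 2) => ∀ i, Q fun k => v k i),
          (if ∀ q ∈ EqPairs, v q.1 ≠ v q.2 then (1:ℤ) else 0) :=
        (sum_filter_ind _ _).symm
    _ = ∑ v ∈ univ.filter (fun v : Fin 4 → (Fin m → ZMod 2) => ∀ i, Q fun k => v k i),
          ∏ q ∈ EqPairs, (if v q.1 ≠ v q.2 then (1:ℤ) else 0) :=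
        Finset.sum_congr rfl fun v _ => by rw [prod_ind]; exact ite_irrel 1 0
    _ = ∑ v ∈ univ.filter (fun v : Fin 4 → (Fin m → ZMod 2) => ∀ i, Q fun k => v k i),
          ∑ E ∈ EqPairs.powerset, (-1:ℤ)^E.card *
            (if ∀ q ∈ E, v q.1 = v q.2 then (1:ℤ) else 0) :=
        Finset.sum_congr rfl fun v _ => key v
    _ = ∑ E ∈ EqPairs.powerset,
          ∑ v ∈ univ.filter (fun v : Fin 4 → (Fin m → ZMod 2) => ∀ i, Q fun k => v k i),
          (-1:ℤ)^E.card * (if ∀ q ∈ E, v q.1 = v q.2 then (1:ℤ) else 0) :=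
        Finset.sum_comm
    _ = ∑ E ∈ EqPairs.powerset, (-1:ℤ)^E.card * (pat Q E : ℤ)^m := by
        apply Finset.sum_congr rfl
        intro E hE
        rw [← Finset.mul_sum, sum_filter_ind, count_eqs m Q E]

def Dst (m : ℕ) : Finset (Fin 4 → Fin m → ZMod 2) :=
  univ.filter fun v => (∀ i, Ok fun k => v k i) ∧ ∀ q ∈ EqPairs, v q.1 ≠ v q.2

def Dfin (m : ℕ) : Finset (Fin 4 → Fin m → ZMod 2) :=
  (Dst m).filter fun v => ∀ k, v k ≠ 0

lemma zero_split (m : ℕ) :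
    (Dst m).card = (Dfin m).card + ∑ k : Fin 4, ((Dst m).filter fun v => v k = 0).card := by
  have h1 : ((Dst m).filter fun v => ∀ k, v k ≠ 0).card
      + ((Dst m).filter fun v => ¬ ∀ k, v k ≠ 0).card = (Dst m).card :=
    Finset.card_filter_add_card_filter_not _
  have h2 : ((Dst m).filter fun v => ¬ ∀ k, v k ≠ 0)
      = univ.biUnion fun k => (Dst m).filter fun v => v k = 0 := by
    ext v
    simp only [mem_filter, mem_biUnion, mem_univ, true_and]
    push_neg
    tauto
  have h3 : (univ.biUnion fun k => (Dst m).filter fun v => v k = 0).card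
      = ∑ k : Fin 4, ((Dst m).filter fun v => v k = 0).card := by
    apply Finset.card_biUnion
    intro k _ l _ hkl
    simp only [Finset.disjoint_left, mem_filter]
    rintro v ⟨hv, hk⟩ ⟨-, hl⟩
    simp only [Dst, mem_filter, mem_univ, true_and] at hv
    rcases lt_or_gt_of_ne hkl with h | h
    · exact hv.2 (k, l) (by simp [EqPairs, h]) (hk.trans hl.symm)
    · exact hv.2 (l, k) (by simp [EqPairs, h]) (hl.trans hk.symm)
  have h4 : ((Dst m).filter fun v => ∀ k, v k ≠ 0) = Dfin m := rfl
  rw [h2, h3, h4] at h1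
  exact h1.symm

lemma pat_le (Q : (Fin 4 → ZMod 2) → Prop) [DecidablePred Q]
    (hQ : ∀ p, Q p → Ok p) (E : Finset (Fin 4 × Fin 4)) : pat Q E ≤ 12 := by
  have h12 : (univ.filter Ok).card = 12 := by decide
  rw [pat, ← h12]
  apply Finset.card_le_card
  intro p hp
  simp only [mem_filter, mem_univ, true_and] at *
  exact hQ p hp.1

lemma regroup (m : ℕ) (Q : (Fin 4 → ZMod 2) → Prop) [DecidablePred Q]
    (hQ : ∀ p, Q p → Ok p) :
    ∑ E ∈ EqPairs.powerset, (-1:ℤ)^E.card * (pat Q E : ℤ)^m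
      = ∑ j ∈ Finset.range 13,
          ((EqPairs.powerset.filter fun E => pat Q E = j).sum fun E => (-1:ℤ)^E.card)
            * (j:ℤ)^m := by
  have h : EqPairs.powerset
      = EqPairs.powerset.filter (fun E => pat Q E ∈ Finset.range 13) :=
    (Finset.filter_true_of_mem fun E _ =>
      Finset.mem_range.mpr (lt_of_le_of_lt (pat_le Q hQ E) (by norm_num))).symm
  conv_lhs => rw [h]
  rw [← Finset.sum_fiberwise_eq_sum_filter EqPairs.powerset (Finset.range 13)
    (fun E => pat Q E) (fun E => (-1:ℤ)^E.card * (pat Q E : ℤ)^m)]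
  apply Finset.sum_congr rfl
  intro j _
  rw [Finset.sum_mul]
  apply Finset.sum_congr rfl
  intro E hE
  rw [(Finset.mem_filter.mp hE).2]

lemma fibD : ∀ j ∈ Finset.range 13,
    ((EqPairs.powerset.filter fun E => pat Ok E = j).sum fun E => (-1:ℤ)^E.card)
      = [0,0,-6,8,3,0,-6,0,0,0,0,0,1].getD j 0 := by decide

lemma fibK : ∀ k : Fin 4, ∀ j ∈ Finset.range 13,
    ((EqPairs.powerset.filter fun E => pat (fun p => Ok p ∧ p k = 0) E = j).sum
        fun E => (-1:ℤ)^E.card)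
      = [0,0,2,-3,0,1,0,0,0,0,0,0,0].getD j 0 := by decide

lemma DstCard (m : ℕ) :
    ((Dst m).card : ℤ) = 12^m - 6*6^m + 3*4^m + 8*3^m - 6*2^m := by
  have h0 : ((Dst m).card : ℤ)
      = ∑ E ∈ EqPairs.powerset, (-1:ℤ)^E.card * (pat Ok E : ℤ)^m := IE m Ok
  rw [h0, regroup m Ok (fun p h => h)]
  have : ∑ j ∈ Finset.range 13,
      ((EqPairs.powerset.filter fun E => pat Ok E = j).sum fun E => (-1:ℤ)^E.card) * (j:ℤ)^m
    = ∑ j ∈ Finset.range 13, ([0,0,-6,8,3,0,-6,0,0,0,0,0,1].getD j 0) * (j:ℤ)^m := by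
    apply Finset.sum_congr rfl
    intro j hj
    rw [fibD j hj]
  rw [this]
  simp only [Finset.sum_range_succ, Finset.sum_range_zero, List.getD]
  norm_num
  ring

lemma DstK (m : ℕ) (k : Fin 4) :
    (((Dst m).filter fun v => v k = 0).card : ℤ) = 5^m - 3*3^m + 2*2^m := by
  have hset : (Dst m).filter (fun v => v k = 0)
      = univ.filter fun v : Fin 4 → Fin m → ZMod 2 =>
          (∀ i, (fun p => Ok p ∧ p k = 0) fun kk => v kk i)
            ∧ ∀ q ∈ EqPairs, v q.1 ≠ v q.2 := by
    ext v
    simp only [Dst, mem_filter, mem_univ, true_and]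
    constructor
    · rintro ⟨⟨h1, h2⟩, h3⟩
      exact ⟨fun i => ⟨h1 i, congrFun h3 i⟩, h2⟩
    · rintro ⟨h1, h2⟩
      exact ⟨⟨fun i => (h1 i).1, h2⟩, funext fun i => (h1 i).2⟩
  rw [hset, IE m (fun p => Ok p ∧ p k = 0), regroup m _ (fun p h => h.1),
    ]
  have : ∑ j ∈ Finset.range 13,
      ((EqPairs.powerset.filter fun E => pat (fun p => Ok p ∧ p k = 0) E = j).sum
        fun E => (-1:ℤ)^E.card) * (j:ℤ)^m
    = ∑ j ∈ Finset.range 13, ([0,0,2,-3,0,1,0,0,0,0,0,0,0].getD j 0) * (j:ℤ)^m := by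
    apply Finset.sum_congr rfl
    intro j hj
    rw [fibK k j hj]
  rw [this]
  simp only [Finset.sum_range_succ, Finset.sum_range_zero, List.getD]
  norm_num
  ring

lemma DfinCard (m : ℕ) :
    ((Dfin m).card : ℤ) = 12^m - 6*6^m - 4*5^m + 3*4^m + 20*3^m - 14*2^m := by
  have h := zero_split m
  have h1 := DstCard m
  have h3 : ((Dst m).card : ℤ)
      = (Dfin m).card + ∑ k : Fin 4, (((Dst m).filter fun v => v k = 0).card : ℤ) := by
    exact_mod_cast congrArg (Nat.cast (R := ℤ)) h
  rw [Finset.sum_congr rfl (fun k _ => DstK m k), Finset.sum_const] at h3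
  simp only [Finset.card_univ, Fintype.card_fin, nsmul_eq_mul] at h3
  push_cast at h3
  linarith

lemma inj_of_pairs {α : Type*} {v : Fin 4 → α} (h : ∀ q ∈ EqPairs, v q.1 ≠ v q.2) :
    Function.Injective v := by
  intro k l hkl
  by_contra hne
  rcases lt_or_gt_of_ne hne with hlt | hlt
  · exact h (k, l) (by simp [EqPairs, hlt]) hkl
  · exact h (l, k) (by simp [EqPairs, hlt]) hkl.symm

lemma card_tuples_image {α : Type*} [DecidableEq α] [Fintype α] (T : Finset α)
    (hT : T.card = 4) :
    (univ.filter fun v : Fin 4 → α => Finset.image v univ = T).card = 24 := by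
  rw [← Fintype.card_subtype]
  have hcardT : Fintype.card (↥T) = 4 := by rw [Fintype.card_coe, hT]
  have hinj : ∀ v : {v : Fin 4 → α // Finset.image v univ = T}, Function.Injective v.1 := by
    intro v
    have h4 : (Finset.image v.1 univ).card = (univ : Finset (Fin 4)).card := by
      rw [v.2, hT]; simp
    have h5 := Finset.card_image_iff.mp h4
    intro a b hab
    exact h5 (mem_coe.mpr (mem_univ a)) (mem_coe.mpr (mem_univ b)) hab
  let F : {v : Fin 4 → α // Finset.image v univ = T} → (Fin 4 ≃ ↥T) := fun v =>
    Equiv.ofBijective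
      (fun k => (⟨v.1 k, by have hm := Finset.mem_image_of_mem v.1 (mem_univ k); rwa [v.2] at hm⟩ : ↥T))
      ((Fintype.bijective_iff_injective_and_card _).mpr
        ⟨fun a b hab => hinj v (congrArg Subtype.val hab), by simp [hcardT]⟩)
  let G : (Fin 4 ≃ ↥T) → {v : Fin 4 → α // Finset.image v univ = T} := fun e =>
    ⟨fun k => (e k : α), by
      apply Finset.eq_of_subset_of_card_le
      · intro x hx
        rcases Finset.mem_image.mp hx with ⟨k, -, rfl⟩
        exact (e k).2
      · have hi : Function.Injective fun k => ((e k : α)) := fun a b hab =>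
          e.injective (Subtype.ext hab)
        rw [Finset.card_image_of_injective _ hi, hT]
        simp⟩
  have e : {v : Fin 4 → α // Finset.image v univ = T} ≃ (Fin 4 ≃ ↥T) :=
    { toFun := F
      invFun := G
      left_inv := fun v => Subtype.ext rfl
      right_inv := fun e => Equiv.ext fun k => Subtype.ext rfl }
  rw [Fintype.card_congr e,
    Fintype.card_equiv (Fintype.equivOfCardEq
      (show Fintype.card (Fin 4) = Fintype.card ↥T by simp [hcardT])),
    Fintype.card_fin]
  norm_num [Nat.factorial]

def SetsT (m : ℕ) : Finset (Finset (Fin m → ZMod 2)) :=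
  univ.filter fun T => (∀ v ∈ T, v ≠ 0) ∧ (∀ i, (T.filter fun v => v i = 1).card ≠ 1)
    ∧ T.card = 4

lemma Dfin_eq_24 (m : ℕ) : (Dfin m).card = 24 * (SetsT m).card := by
  have hmaps : ∀ v ∈ Dfin m, Finset.image v univ ∈ SetsT m := by
    intro v hv
    simp only [Dfin, Dst, mem_filter, mem_univ, true_and] at hv
    obtain ⟨⟨hok, hdist⟩, hnz⟩ := hv
    have hinj : Function.Injective v := inj_of_pairs hdist
    simp only [SetsT, mem_filter, mem_univ, true_and]
    refine ⟨?_, ?_, ?_⟩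
    · intro x hx
      rcases Finset.mem_image.mp hx with ⟨k, -, rfl⟩
      exact hnz k
    · intro i
      rw [Finset.filter_image, Finset.card_image_of_injective _ hinj]
      exact hok i
    · rw [Finset.card_image_of_injective _ hinj]
      simp
  rw [Finset.card_eq_sum_card_fiberwise hmaps]
  have hfib : ∀ T ∈ SetsT m,
      ((Dfin m).filter fun v => Finset.image v univ = T).card = 24 := by
    intro T hT
    simp only [SetsT, mem_filter, mem_univ, true_and] at hT
    obtain ⟨hnzT, hokT, hcT⟩ := hT
    have hset : (Dfin m).filter (fun v => Finset.image v univ = T)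
        = univ.filter fun v : Fin 4 → Fin m → ZMod 2 => Finset.image v univ = T := by
      ext v
      simp only [Dfin, Dst, mem_filter, mem_univ, true_and]
      constructor
      · tauto
      · intro hv
        have hinj : Function.Injective v := by
          have h4 : (Finset.image v univ).card = (univ : Finset (Fin 4)).card := by
            rw [hv, hcT]; simp
          have := Finset.card_image_iff.mp h4
          intro a b hab
          exact this (mem_coe.mpr (mem_univ a)) (mem_coe.mpr (mem_univ b)) hab
        refine ⟨⟨⟨fun i => ?_, fun q hq => ?_⟩, fun k => ?_⟩, hv⟩
        · have := hokT i
          rw [← hv, Finset.filter_image, Finset.card_image_of_injective _ hinj] at this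
          exact this
        · have hlt : q.1 < q.2 := by
            simpa [EqPairs] using hq
          exact fun hh => absurd (hinj hh) (ne_of_lt hlt)
        · intro hk
          exact hnzT (v k) (hv ▸ Finset.mem_image_of_mem v (mem_univ k)) hk
    rw [hset]
    exact card_tuples_image T hcT
  rw [Finset.sum_congr rfl hfib, Finset.sum_const, smul_eq_mul, mul_comm]

/-- For the Hamming code parity-check matrix (m ≥ 2),
S_4 = (1/24)(12^m − 6·6^m − 4·5^m + 3·4^m + 20·3^m − 14·2^m). -/
theorem stmt16 (m : ℕ) (hm : 2 ≤ m) (H : Matrix (Fin m) (Fin (2 ^ m - 1)) (ZMod 2))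
    (hinj : Function.Injective (fun j : Fin (2 ^ m - 1) => fun i => H i j))
    (hnz : ∀ j, (fun i => H i j) ≠ (0 : Fin m → ZMod 2)) :
    (numStoppingSets H 4 : ℚ) =
      (1 / 24) * ((12 : ℚ) ^ m - 6 * 6 ^ m - 4 * 5 ^ m + 3 * 4 ^ m + 20 * 3 ^ m - 14 * 2 ^ m) := by
  classical
  set col : Fin (2 ^ m - 1) → (Fin m → ZMod 2) := fun j i => H i j with hcol
  have hcolinj : Function.Injective col := hinj
  have hA : numStoppingSets H 4
      = (univ.filter fun S : Finset (Fin (2 ^ m - 1)) =>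
          IsStoppingSet H S ∧ S.card = 4).card := by
    rw [numStoppingSets, Nat.card_eq_fintype_card, Fintype.card_subtype]
  have hcard : Fintype.card {v : Fin m → ZMod 2 // v ≠ 0} = 2 ^ m - 1 := by
    have h1 : Fintype.card {v : Fin m → ZMod 2 // ¬ v = 0}
        = Fintype.card (Fin m → ZMod 2) - Fintype.card {v : Fin m → ZMod 2 // v = 0} :=
      Fintype.card_subtype_compl _
    have h2 : Fintype.card (Fin m → ZMod 2) = 2 ^ m := by
      rw [Fintype.card_fun, Fintype.card_fin]
      norm_num
    have h3 : Fintype.card {v : Fin m → ZMod 2 // v = 0} = 1 := Fintype.card_subtype_eq 0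
    calc Fintype.card {v : Fin m → ZMod 2 // v ≠ 0}
        = Fintype.card {v : Fin m → ZMod 2 // ¬ v = 0} := rfl
      _ = 2 ^ m - 1 := by rw [h1, h2, h3]
  have hsurj : ∀ v : Fin m → ZMod 2, v ≠ 0 → ∃ j, col j = v := by
    have hbij : Function.Bijective (fun j : Fin (2 ^ m - 1) => (⟨col j, hnz j⟩ :
        {v : Fin m → ZMod 2 // v ≠ 0})) := by
      refine (Fintype.bijective_iff_injective_and_card _).mpr ⟨?_, ?_⟩
      · intro a b hab
        exact hcolinj (congrArg Subtype.val hab)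
      · rw [hcard, Fintype.card_fin]
    intro v hv
    obtain ⟨j, hj⟩ := hbij.2 ⟨v, hv⟩
    exact ⟨j, congrArg Subtype.val hj⟩
  have himg : ∀ (S : Finset (Fin (2 ^ m - 1))) (i : Fin m),
      ((S.image col).filter fun v => v i = 1).card
        = (S.filter fun j => H i j = 1).card := by
    intro S i
    rw [Finset.filter_image, Finset.card_image_of_injective _ hcolinj]
  have hB : (univ.filter fun S : Finset (Fin (2 ^ m - 1)) =>
      IsStoppingSet H S ∧ S.card = 4).card = (SetsT m).card := by
    apply Finset.card_nbij (fun S => S.image col)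
    · intro S hS
      simp only [mem_coe, mem_filter, mem_univ, true_and] at hS
      obtain ⟨hstop, hc4⟩ := hS
      simp only [SetsT, mem_coe, mem_filter, mem_univ, true_and]
      refine ⟨?_, ?_, ?_⟩
      · intro v hv
        rcases Finset.mem_image.mp hv with ⟨j, -, rfl⟩
        exact hnz j
      · intro i
        rw [himg S i]
        exact hstop i
      · rw [Finset.card_image_of_injective _ hcolinj, hc4]
    · intro S1 _ S2 _ heq
      exact Finset.image_injective hcolinj heq
    · intro T hT
      simp only [SetsT, Set.mem_image, mem_coe, mem_filter, mem_univ, true_and] at hT ⊢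
      obtain ⟨hnzT, hokT, hcT⟩ := hT
      have himg2 : (univ.filter fun j => col j ∈ T).image col = T := by
        apply Finset.Subset.antisymm
        · intro v hv
          rcases Finset.mem_image.mp hv with ⟨j, hj, rfl⟩
          exact (mem_filter.mp hj).2
        · intro v hv
          rcases hsurj v (hnzT v hv) with ⟨j, rfl⟩
          exact Finset.mem_image_of_mem _ (mem_filter.mpr ⟨mem_univ j, hv⟩)
      refine ⟨univ.filter fun j => col j ∈ T, ⟨?_, ?_⟩, himg2⟩
      · intro i
        have hh := hokT i
        rw [← himg2, himg] at hh
        exact hh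
      · have hh := congrArg Finset.card himg2
        rw [Finset.card_image_of_injective _ hcolinj] at hh
        rw [hh, hcT]
  have h24 : (Dfin m).card = 24 * numStoppingSets H 4 := by
    rw [Dfin_eq_24 m, hA, hB]
  have hD := DfinCard m
  rw [h24] at hD
  have hQ : (numStoppingSets H 4 : ℚ) * 24
      = (12 : ℚ) ^ m - 6 * 6 ^ m - 4 * 5 ^ m + 3 * 4 ^ m + 20 * 3 ^ m - 14 * 2 ^ m := by
    have := congrArg (fun z : ℤ => (z : ℚ)) hD
    push_cast at this
    linarith
  linarith
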